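/- Let 0 ≤ β < α ≤ 1 be real and set c_m = Σ_{i=0}^{m} α^{m−i} r_{m−i} r_i β^i. Then for every integer j ≥ 1: if α = 1 then log(j+1)/4 ≤ Σ_{i=0}^{j−1} c_i² ≤ (1 + log j)/(1 − β)², and if α < 1 then 1 ≤ Σ_{i=0}^{j−1} c_i² ≤ (1/(α − β)²)·log(1/(1 − α²)). Here log denotes the natural logarithm. -/

import Mathlib

open Finset Real

/-- `r_m = (1/4^m)·C(2m,m)`. -/
noncomputable def rCoef (m : ℕ) : ℝ := (1 / 4 ^ m) * (Nat.choose (2 * m) m : ℝ)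

/-- `c_m = Σ_{i=0}^{m} α^{m−i} r_{m−i} r_i β^i`. -/
noncomputable def cCoef (α β : ℝ) (m : ℕ) : ℝ :=
  ∑ i ∈ Finset.range (m + 1), α ^ (m - i) * rCoef (m - i) * rCoef i * β ^ i

lemma rCoef_zero : rCoef 0 = 1 := by simp [rCoef]

lemma rCoef_pos (m : ℕ) : 0 < rCoef m := by
  unfold rCoef
  apply mul_pos (by positivity)
  exact_mod_cast Nat.choose_pos (by omega)

lemma rCoef_succ (m : ℕ) : rCoef (m + 1) = rCoef m * ((2 * m + 1) / (2 * m + 2)) := by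
  have h := Nat.succ_mul_centralBinom_succ m
  have h' : ((m : ℝ) + 1) * ((2 * (m + 1)).choose (m + 1) : ℝ)
      = 2 * (2 * (m : ℝ) + 1) * ((2 * m).choose m : ℝ) := by
    exact_mod_cast congrArg (Nat.cast (R := ℝ)) h
  unfold rCoef
  have hm1 : ((m : ℝ) + 1) ≠ 0 := by positivity
  have h4 : (4 : ℝ) ^ m ≠ 0 := by positivity
  field_simp
  ring_nf
  ring_nf at h'
  nlinarith [pow_pos (show (0:ℝ) < 4 by norm_num) m, h']

lemma rCoef_le_one (m : ℕ) : rCoef m ≤ 1 := by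
  induction m with
  | zero => simp [rCoef_zero]
  | succ n ih =>
    rw [rCoef_succ]
    have h1 : (2 * (n:ℝ) + 1) / (2 * n + 2) ≤ 1 := by
      rw [div_le_one (by positivity)]; linarith
    calc rCoef n * ((2 * (n:ℝ) + 1) / (2 * n + 2)) ≤ 1 * 1 := by
          apply mul_le_mul ih h1 (by positivity) (by norm_num)
      _ = 1 := by norm_num

lemma rCoef_mul_le (a b : ℕ) : rCoef a * rCoef b ≤ rCoef (a + b) := by
  induction b with
  | zero => simp [rCoef_zero]
  | succ n ih =>
    rw [rCoef_succ, show a + (n+1) = (a+n)+1 from rfl, rCoef_succ]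
    have hq : (2 * (n:ℝ) + 1) / (2 * n + 2) ≤ (2 * ((a:ℝ) + n) + 1) / (2 * (a + n) + 2) := by
      rw [div_le_div_iff₀ (by positivity) (by positivity)]
      push_cast
      nlinarith [Nat.cast_nonneg (α := ℝ) a, Nat.cast_nonneg (α := ℝ) n]
    calc rCoef a * (rCoef n * ((2 * (n:ℝ) + 1) / (2 * n + 2)))
        = (rCoef a * rCoef n) * ((2 * (n:ℝ) + 1) / (2 * n + 2)) := by ring
      _ ≤ rCoef (a + n) * ((2 * ((a:ℝ) + n) + 1) / (2 * (a + n) + 2)) := by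
          apply mul_le_mul ih hq (by positivity) (rCoef_pos _).le
      _ = rCoef (a + n) * ((2 * (((a:ℕ)+n : ℕ):ℝ) + 1) / (2 * (((a:ℕ)+n : ℕ):ℝ) + 2)) := by
          push_cast; ring

lemma rCoef_sq_le (m : ℕ) : rCoef m ^ 2 ≤ 1 / (3 * m + 1) := by
  induction m with
  | zero => simp [rCoef_zero]
  | succ n ih =>
    rw [rCoef_succ, mul_pow]
    have hn : (0:ℝ) ≤ n := Nat.cast_nonneg n
    have key : ((2 * (n:ℝ) + 1) / (2 * n + 2)) ^ 2 * (1 / (3 * n + 1)) ≤ 1 / (3 * (n+1) + 1) := by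
      rw [div_pow, div_mul_div_comm, div_le_div_iff₀ (by positivity) (by positivity)]
      ring_nf
      nlinarith [hn]
    calc rCoef n ^ 2 * ((2 * (n:ℝ) + 1) / (2 * n + 2)) ^ 2
        ≤ (1 / (3 * n + 1)) * ((2 * (n:ℝ) + 1) / (2 * n + 2)) ^ 2 := by
          apply mul_le_mul_of_nonneg_right ih (by positivity)
      _ ≤ 1 / (3 * ((n:ℝ)+1) + 1) := by rw [mul_comm]; exact key
      _ = 1 / (3 * ((n+1:ℕ):ℝ) + 1) := by push_cast; ring

lemma le_rCoef_sq (m : ℕ) : 1 / (4 * (m:ℝ) + 1) ≤ rCoef m ^ 2 := by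
  induction m with
  | zero => simp [rCoef_zero]
  | succ n ih =>
    rw [rCoef_succ, mul_pow]
    have hn : (0:ℝ) ≤ n := Nat.cast_nonneg n
    have key : 1 / (4 * ((n:ℝ)+1) + 1) ≤ (1 / (4 * n + 1)) * ((2 * (n:ℝ) + 1) / (2 * n + 2)) ^ 2 := by
      rw [div_pow, div_mul_div_comm, div_le_div_iff₀ (by positivity) (by positivity)]
      nlinarith [hn]
    calc 1 / (4 * ((n+1:ℕ):ℝ) + 1) = 1 / (4 * ((n:ℝ)+1) + 1) := by push_cast; ring
      _ ≤ (1 / (4 * n + 1)) * ((2 * (n:ℝ) + 1) / (2 * n + 2)) ^ 2 := key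
      _ ≤ rCoef n ^ 2 * ((2 * (n:ℝ) + 1) / (2 * n + 2)) ^ 2 := by
          apply mul_le_mul_of_nonneg_right ih (by positivity)

lemma cCoef_zero (α β : ℝ) : cCoef α β 0 = 1 := by simp [cCoef, rCoef_zero]

lemma cCoef_nonneg {α β : ℝ} (hβ : 0 ≤ β) (hα : 0 ≤ α) (m : ℕ) : 0 ≤ cCoef α β m := by
  apply Finset.sum_nonneg
  intro i _
  have := rCoef_pos (m - i); have := rCoef_pos i
  positivity

lemma geomSumLe {x : ℝ} (h0 : 0 ≤ x) (h1 : x < 1) (n : ℕ) :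
    ∑ i ∈ Finset.range n, x ^ i ≤ 1 / (1 - x) := by
  have h : (0:ℝ) < 1 - x := by linarith
  rw [le_div_iff₀ h]
  have hg := geom_sum_mul x n
  nlinarith [pow_nonneg h0 n]

-- α = 1 case bounds on cCoef
lemma rCoef_le_cCoef {β : ℝ} (hβ : 0 ≤ β) (m : ℕ) : rCoef m ≤ cCoef 1 β m := by
  have h0 : (0:ℕ) ∈ Finset.range (m+1) := by simp
  have := Finset.single_le_sum (f := fun i => (1:ℝ) ^ (m - i) * rCoef (m - i) * rCoef i * β ^ i)
    (fun i _ => by have := rCoef_pos (m - i); have := rCoef_pos i; positivity) h0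
  simpa [cCoef, rCoef_zero] using this

lemma cCoef_one_le {β : ℝ} (hβ : 0 ≤ β) (hβ1 : β < 1) (m : ℕ) :
    cCoef 1 β m ≤ rCoef m * (1 / (1 - β)) := by
  have step : cCoef 1 β m ≤ ∑ i ∈ Finset.range (m+1), rCoef m * β ^ i := by
    apply Finset.sum_le_sum
    intro i hi
    have him : i ≤ m := by simpa using Nat.lt_succ_iff.mp (Finset.mem_range.mp hi)
    have hmul : rCoef (m - i) * rCoef i ≤ rCoef m := by
      have := rCoef_mul_le (m - i) i
      rwa [Nat.sub_add_cancel him] at this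
    have hb : (0:ℝ) ≤ β ^ i := pow_nonneg hβ i
    calc (1:ℝ) ^ (m - i) * rCoef (m - i) * rCoef i * β ^ i
        = (rCoef (m - i) * rCoef i) * β ^ i := by ring
      _ ≤ rCoef m * β ^ i := mul_le_mul_of_nonneg_right hmul hb
  rw [← Finset.mul_sum] at step
  calc cCoef 1 β m ≤ rCoef m * ∑ i ∈ Finset.range (m+1), β ^ i := step
    _ ≤ rCoef m * (1 / (1 - β)) :=
        mul_le_mul_of_nonneg_left (geomSumLe hβ hβ1 _) (rCoef_pos m).le

-- α < 1 case bound
lemma cCoef_lt_le {α β : ℝ} (hβ : 0 ≤ β) (hβα : β < α) (m : ℕ) :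
    cCoef α β m ≤ rCoef m * α ^ (m+1) / (α - β) := by
  have hα0 : 0 < α := lt_of_le_of_lt hβ hβα
  have step : cCoef α β m ≤ ∑ i ∈ Finset.range (m+1), rCoef m * (α ^ m * (β/α) ^ i) := by
    apply Finset.sum_le_sum
    intro i hi
    have him : i ≤ m := Nat.lt_succ_iff.mp (Finset.mem_range.mp hi)
    have hmul : rCoef (m - i) * rCoef i ≤ rCoef m := by
      have := rCoef_mul_le (m - i) i
      rwa [Nat.sub_add_cancel him] at this
    have heq : α ^ (m - i) * β ^ i = α ^ m * (β/α) ^ i := by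
      have hm : α ^ m = α ^ (m - i) * α ^ i := by rw [← pow_add, Nat.sub_add_cancel him]
      have hαi : (α:ℝ) ^ i ≠ 0 := by positivity
      rw [div_pow, hm]
      field_simp
    have hb : (0:ℝ) ≤ α ^ (m-i) * β ^ i := by positivity
    calc α ^ (m - i) * rCoef (m - i) * rCoef i * β ^ i
        = (rCoef (m - i) * rCoef i) * (α ^ (m-i) * β ^ i) := by ring
      _ ≤ rCoef m * (α ^ (m-i) * β ^ i) := mul_le_mul_of_nonneg_right hmul hb
      _ = rCoef m * (α ^ m * (β/α) ^ i) := by rw [heq]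
  rw [← Finset.mul_sum] at step
  have hba : β / α < 1 := (div_lt_one hα0).mpr hβα
  have hba0 : 0 ≤ β / α := by positivity
  have hg : ∑ i ∈ Finset.range (m+1), (β/α) ^ i ≤ 1 / (1 - β/α) := geomSumLe hba0 hba _
  have h1 : (1:ℝ) / (1 - β/α) = α / (α - β) := by
    have he : 1 - β/α = (α-β)/α := by field_simp
    rw [he, one_div_div]
  calc cCoef α β m ≤ rCoef m * ∑ i ∈ Finset.range (m+1), (α ^ m * (β/α) ^ i) := step
    _ = rCoef m * α ^ m * ∑ i ∈ Finset.range (m+1), (β/α) ^ i := by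
        rw [← Finset.mul_sum]; ring
    _ ≤ rCoef m * α ^ m * (α / (α - β)) := by
        rw [← h1]
        have hr := rCoef_pos m
        apply mul_le_mul_of_nonneg_left hg (by positivity)
    _ = rCoef m * α ^ (m+1) / (α - β) := by rw [pow_succ]; ring

lemma log_quarter_le (j : ℕ) :
    Real.log (j + 1) / 4 ≤ ∑ m ∈ Finset.range j, 1 / (4 * (m:ℝ) + 1) := by
  have tele : ∑ m ∈ Finset.range j,
      (Real.log ((m:ℝ) + 1 + 1) - Real.log ((m:ℝ) + 1)) = Real.log (j + 1) := by
    have := Finset.sum_range_sub (fun m => Real.log ((m:ℝ) + 1)) j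
    simpa using this
  have step : ∀ m ∈ Finset.range j,
      (Real.log ((m:ℝ) + 1 + 1) - Real.log ((m:ℝ) + 1)) / 4 ≤ 1 / (4 * (m:ℝ) + 1) := by
    intro m _
    have hm : (0:ℝ) < (m:ℝ) + 1 := by positivity
    have hd : Real.log ((m:ℝ) + 1 + 1) - Real.log ((m:ℝ) + 1) ≤ 1 / ((m:ℝ) + 1) := by
      rw [← Real.log_div (by linarith) (by linarith)]
      have := Real.log_le_sub_one_of_pos (show (0:ℝ) < ((m:ℝ)+1+1)/((m:ℝ)+1) by positivity)
      have he : ((m:ℝ)+1+1)/((m:ℝ)+1) - 1 = 1/((m:ℝ)+1) := by field_simp; ring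
      linarith [this, he.le]
    have h2 : (1:ℝ) / ((m:ℝ)+1) / 4 ≤ 1 / (4 * (m:ℝ) + 1) := by
      rw [div_div, div_le_div_iff₀ (by positivity) (by positivity)]
      nlinarith [Nat.cast_nonneg (α := ℝ) m]
    calc (Real.log ((m:ℝ) + 1 + 1) - Real.log ((m:ℝ) + 1)) / 4
        ≤ 1 / ((m:ℝ)+1) / 4 := by linarith
      _ ≤ 1 / (4 * (m:ℝ) + 1) := h2
  calc Real.log (j + 1) / 4
      = ∑ m ∈ Finset.range j, (Real.log ((m:ℝ) + 1 + 1) - Real.log ((m:ℝ) + 1)) / 4 := by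
        rw [← Finset.sum_div, tele]
    _ ≤ ∑ m ∈ Finset.range j, 1 / (4 * (m:ℝ) + 1) := Finset.sum_le_sum step

lemma sum_inv_le_log (k : ℕ) :
    ∑ m ∈ Finset.range k, 1 / (3 * (m:ℝ) + 4) ≤ Real.log (k + 1) := by
  have tele : ∑ m ∈ Finset.range k,
      (Real.log ((m:ℝ) + 1 + 1) - Real.log ((m:ℝ) + 1)) = Real.log (k + 1) := by
    have := Finset.sum_range_sub (fun m => Real.log ((m:ℝ) + 1)) k
    simpa using this
  rw [← tele]
  apply Finset.sum_le_sum
  intro m _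
  have hm : (0:ℝ) < (m:ℝ) + 1 := by positivity
  have hd : 1 / ((m:ℝ) + 2) ≤ Real.log ((m:ℝ) + 1 + 1) - Real.log ((m:ℝ) + 1) := by
    have hlog : Real.log ((m:ℝ) + 1) - Real.log ((m:ℝ) + 1 + 1) ≤ -(1 / ((m:ℝ) + 2)) := by
      rw [← Real.log_div (by linarith) (by linarith)]
      have := Real.log_le_sub_one_of_pos (show (0:ℝ) < ((m:ℝ)+1)/((m:ℝ)+1+1) by positivity)
      have he : ((m:ℝ)+1)/((m:ℝ)+1+1) - 1 = -(1/((m:ℝ)+2)) := by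
        field_simp
        ring
      linarith [this, he.le]
    linarith
  have h2 : (1:ℝ) / (3 * (m:ℝ) + 4) ≤ 1 / ((m:ℝ) + 2) := by
    apply one_div_le_one_div_of_le (by positivity)
    nlinarith [Nat.cast_nonneg (α := ℝ) m]
  linarith

lemma sum_pow_div_le_neg_log {x : ℝ} (h0 : 0 ≤ x) (h1 : x < 1) (j : ℕ) :
    ∑ m ∈ Finset.range j, x ^ (m + 1) / ((m:ℝ) + 1) ≤ -Real.log (1 - x) := by
  exact sum_le_hasSum (Finset.range j) (fun i _ => by positivity)
    (Real.hasSum_pow_div_log_of_abs_lt_one (by rwa [abs_of_nonneg h0]))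

/-- bounds on the partial sums of squares of the `c_i`. -/
theorem sum_sq_cCoef_bounds (α β : ℝ) (hβ : 0 ≤ β) (hβα : β < α) (hα : α ≤ 1) :
    ∀ j : ℕ, 1 ≤ j →
      (α = 1 →
        Real.log (j + 1) / 4 ≤ ∑ i ∈ Finset.range j, cCoef α β i ^ 2 ∧
          ∑ i ∈ Finset.range j, cCoef α β i ^ 2 ≤ (1 + Real.log j) / (1 - β) ^ 2) ∧
      (α < 1 →
        1 ≤ ∑ i ∈ Finset.range j, cCoef α β i ^ 2 ∧
          ∑ i ∈ Finset.range j, cCoef α β i ^ 2 ≤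
            (1 / (α - β) ^ 2) * Real.log (1 / (1 - α ^ 2))) := by
  have hα0 : 0 < α := lt_of_le_of_lt hβ hβα
  intro j hj
  constructor
  · -- α = 1 case
    intro hα1
    subst hα1
    have hβ1 : β < 1 := hβα
    constructor
    · -- lower bound
      calc Real.log (j + 1) / 4
          ≤ ∑ m ∈ Finset.range j, 1 / (4 * (m:ℝ) + 1) := log_quarter_le j
        _ ≤ ∑ m ∈ Finset.range j, rCoef m ^ 2 :=
            Finset.sum_le_sum fun m _ => le_rCoef_sq m
        _ ≤ ∑ m ∈ Finset.range j, cCoef 1 β m ^ 2 := by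
            apply Finset.sum_le_sum
            intro m _
            exact pow_le_pow_left₀ (rCoef_pos m).le (rCoef_le_cCoef hβ m) 2
    · -- upper bound
      obtain ⟨k, rfl⟩ : ∃ k, j = k + 1 := ⟨j - 1, by omega⟩
      have h1β : (0:ℝ) < 1 - β := by linarith
      have key : ∀ m : ℕ, cCoef 1 β (m + 1) ^ 2 ≤ (1 / (3 * (m:ℝ) + 4)) * (1 / (1 - β) ^ 2) := by
        intro m
        have hc := cCoef_one_le hβ hβ1 (m + 1)
        have h2 : cCoef 1 β (m+1) ^ 2 ≤ (rCoef (m+1) * (1 / (1 - β))) ^ 2 :=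
          pow_le_pow_left₀ (cCoef_nonneg hβ (by norm_num) (m+1)) hc 2
        have h3 : rCoef (m+1) ^ 2 ≤ 1 / (3 * (m:ℝ) + 4) := by
          have := rCoef_sq_le (m+1)
          have he : (3 : ℝ) * ((m+1 : ℕ):ℝ) + 1 = 3 * (m:ℝ) + 4 := by push_cast; ring
          rwa [he] at this
        calc cCoef 1 β (m+1) ^ 2 ≤ (rCoef (m+1) * (1 / (1 - β))) ^ 2 := h2
          _ = rCoef (m+1) ^ 2 * (1 / (1 - β) ^ 2) := by rw [mul_pow, one_div, one_div, inv_pow]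
          _ ≤ (1 / (3 * (m:ℝ) + 4)) * (1 / (1 - β) ^ 2) :=
              mul_le_mul_of_nonneg_right h3 (by positivity)
      have hc0 : cCoef 1 β 0 ^ 2 = 1 := by rw [cCoef_zero]; norm_num
      calc ∑ i ∈ Finset.range (k + 1), cCoef 1 β i ^ 2
          = (∑ i ∈ Finset.range k, cCoef 1 β (i + 1) ^ 2) + cCoef 1 β 0 ^ 2 :=
            Finset.sum_range_succ' _ k
        _ ≤ (∑ i ∈ Finset.range k, (1 / (3 * (i:ℝ) + 4)) * (1 / (1 - β) ^ 2)) + 1 := by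
            rw [hc0]
            exact add_le_add_left (Finset.sum_le_sum fun i _ => key i) 1
        _ = (∑ i ∈ Finset.range k, 1 / (3 * (i:ℝ) + 4)) * (1 / (1 - β) ^ 2) + 1 := by
            rw [Finset.sum_mul]
        _ ≤ Real.log (k + 1) * (1 / (1 - β) ^ 2) + 1 := by
            apply add_le_add_left
            exact mul_le_mul_of_nonneg_right (sum_inv_le_log k) (by positivity)
        _ ≤ (1 + Real.log ((k:ℝ) + 1)) / (1 - β) ^ 2 := by
            have hlog : 0 ≤ Real.log ((k:ℝ) + 1) := Real.log_nonneg (by push_cast; linarith [Nat.cast_nonneg (α := ℝ) k])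
            have hb2 : (1 - β) ^ 2 ≤ 1 := by nlinarith
            have hexp : (Real.log ((k:ℝ)+1) * (1 / (1 - β) ^ 2) + 1) * (1-β)^2
                = Real.log ((k:ℝ)+1) + (1-β)^2 := by field_simp
            rw [le_div_iff₀ (by positivity), hexp]
            linarith
        _ = (1 + Real.log (((k+1:ℕ) : ℝ))) / (1 - β) ^ 2 := by push_cast; ring
  · -- α < 1 case
    intro hα1
    constructor
    · -- lower bound
      have h0 : (0:ℕ) ∈ Finset.range j := Finset.mem_range.mpr hj
      have := Finset.single_le_sum (f := fun i => cCoef α β i ^ 2)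
        (fun i _ => sq_nonneg _) h0
      simpa [cCoef_zero] using this
    · -- upper bound
      have hab : (0:ℝ) < α - β := by linarith
      have hx0 : (0:ℝ) ≤ α ^ 2 := sq_nonneg α
      have hx1 : α ^ 2 < 1 := by nlinarith
      have key : ∀ m : ℕ, cCoef α β m ^ 2 ≤
          (1 / (α - β) ^ 2) * ((α ^ 2) ^ (m + 1) / ((m:ℝ) + 1)) := by
        intro m
        have hc := cCoef_lt_le hβ hβα m
        have h2 : cCoef α β m ^ 2 ≤ (rCoef m * α ^ (m+1) / (α - β)) ^ 2 :=
          pow_le_pow_left₀ (cCoef_nonneg hβ hα0.le m) hc 2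
        have h3 : (rCoef m * α ^ (m+1) / (α - β)) ^ 2
            = rCoef m ^ 2 * ((α ^ 2) ^ (m+1)) / (α - β) ^ 2 := by
          rw [div_pow, mul_pow, ← pow_mul, mul_comm (m+1) 2, pow_mul]
        have h4 : rCoef m ^ 2 ≤ 1 / ((m:ℝ) + 1) := by
          refine le_trans (rCoef_sq_le m) ?_
          apply one_div_le_one_div_of_le (by positivity)
          nlinarith [Nat.cast_nonneg (α := ℝ) m]
        calc cCoef α β m ^ 2 ≤ (rCoef m * α ^ (m+1) / (α - β)) ^ 2 := h2
          _ = rCoef m ^ 2 * ((α ^ 2) ^ (m+1)) / (α - β) ^ 2 := h3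
          _ ≤ (1 / ((m:ℝ) + 1)) * ((α ^ 2) ^ (m+1)) / (α - β) ^ 2 := by
              gcongr
          _ = (1 / (α - β) ^ 2) * ((α ^ 2) ^ (m + 1) / ((m:ℝ) + 1)) := by ring
      calc ∑ i ∈ Finset.range j, cCoef α β i ^ 2
          ≤ ∑ i ∈ Finset.range j, (1 / (α - β) ^ 2) * ((α ^ 2) ^ (i + 1) / ((i:ℝ) + 1)) :=
            Finset.sum_le_sum fun i _ => key i
        _ = (1 / (α - β) ^ 2) * ∑ i ∈ Finset.range j, (α ^ 2) ^ (i + 1) / ((i:ℝ) + 1) := by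
            rw [Finset.mul_sum]
        _ ≤ (1 / (α - β) ^ 2) * (-Real.log (1 - α ^ 2)) :=
            mul_le_mul_of_nonneg_left (sum_pow_div_le_neg_log hx0 hx1 j) (by positivity)
        _ = (1 / (α - β) ^ 2) * Real.log (1 / (1 - α ^ 2)) := by
            rw [show (1:ℝ)/(1-α^2) = (1-α^2)⁻¹ from one_div _, Real.log_inv]
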